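/- There exist universal constants c, C > 0 such that the following holds: if (k(n))_{n≥2} is a sequence of positive integers with k(n) = o(ln n) as n → ∞, and T(n) = Z_1 + ... + Z_{k(n)} is a sum of k(n) i.i.d. copies of Z(n), then P( c · k(n) · ln n < T(n) < C · k(n) · ln n ) → 1 as n → ∞. -/

import Mathlib

open MeasureTheory ProbabilityTheory Filter
open scoped ENNReal

/-- The Markov chain modeling the CD-P heuristic (unbounded reach), driven by a
sequence `U` of i.i.d. uniform random variables on `[0,1]`: it starts at `n`, and from a
state `m ≥ 1` it jumps to a uniformly chosen state in `{0, …, m-1}` (state `0` is absorbing). -/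
noncomputable def chainR {Ω : Type*} (n : ℕ) (U : ℕ → Ω → ℝ) : ℕ → Ω → ℕ
  | 0 => fun _ => n
  | (t + 1) => fun ω => ⌊(chainR n U t ω : ℝ) * U (t + 1) ω⌋₊

/-- `hitZ n U` is the hitting time of `0` for the chain `chainR n U`. -/
noncomputable def hitZ {Ω : Type*} (n : ℕ) (U : ℕ → Ω → ℝ) (ω : Ω) : ℕ :=
  sInf {t | chainR n U t ω = 0}

/-- `sumZ n k U ω = Z₁ + ⋯ + Z_k`, a sum of `k` i.i.d. copies of `Z(n)`, where the `i`-th copy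
is driven by the `i`-th row of the doubly-indexed i.i.d. uniform family `U`. -/
noncomputable def sumZ {Ω : Type*} (n k : ℕ) (U : ℕ × ℕ → Ω → ℝ) (ω : Ω) : ℕ :=
  ∑ i ∈ Finset.range k, hitZ n (fun t => U (i, t)) ω

/-- The deterministic recursion underlying `chainR`. -/
noncomputable def runChain (n : ℕ) (u : ℕ → ℝ) : ℕ → ℕ
  | 0 => n
  | (t + 1) => ⌊(runChain n u t : ℝ) * u (t + 1)⌋₊

lemma chainR_eq_runChain {Ω : Type*} (n : ℕ) (U : ℕ → Ω → ℝ) (t : ℕ) (ω : Ω) :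
    chainR n U t ω = runChain n (fun s => U s ω) t := by
  induction t with
  | zero => rfl
  | succ t ih => simp [chainR, runChain, ih]

lemma runChain_congr (n : ℕ) (u v : ℕ → ℝ) (t : ℕ)
    (h : ∀ s, 1 ≤ s → s ≤ t → u s = v s) : runChain n u t = runChain n v t := by
  induction t with
  | zero => rfl
  | succ t ih =>
    have h1 : runChain n u t = runChain n v t :=
      ih fun s hs hst => h s hs (hst.trans (Nat.le_succ t))
    simp [runChain, h1, h (t+1) (Nat.succ_le_succ (Nat.zero_le t)) le_rfl]

lemma measurable_runChain (n t : ℕ) : Measurable (fun u : ℕ → ℝ => runChain n u t) := by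
  induction t with
  | zero => exact measurable_const
  | succ t ih =>
    exact Measurable.nat_floor ((measurable_from_nat.comp ih).mul (measurable_pi_apply (t+1)))

lemma measurable_chainR {Ω : Type*} [MeasurableSpace Ω] (n : ℕ) (U : ℕ → Ω → ℝ)
    (hU : ∀ s, Measurable (U s)) (t : ℕ) : Measurable (chainR n U t) := by
  have : (fun ω => chainR n U t ω) = (fun u : ℕ → ℝ => runChain n u t) ∘ (fun ω s => U s ω) := by
    funext ω; exact chainR_eq_runChain n U t ω
  rw [show chainR n U t = (fun ω => chainR n U t ω) from rfl, this]
  exact (measurable_runChain n t).comp (measurable_pi_lambda _ hU)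

/-- absorption -/
lemma chainR_zero_mono {Ω : Type*} {n : ℕ} {U : ℕ → Ω → ℝ} {ω : Ω} {a b : ℕ}
    (hab : a ≤ b) (h : chainR n U a ω = 0) : chainR n U b ω = 0 := by
  induction b with
  | zero => have : a = 0 := Nat.le_zero.mp hab; simpa [this] using h
  | succ b ih =>
    rcases Nat.lt_or_ge a (b+1) with hb | hb
    · have := ih (by omega)
      simp [chainR, this]
    · have : a = b + 1 := le_antisymm hab hb
      simpa [this] using h

/-- Deterministic decrease: if all the driving values are in `(0,1)`, the chain is dead by
time `n`. -/
lemma chainR_le_sub {Ω : Type*} (n : ℕ) (U : ℕ → Ω → ℝ) (ω : Ω)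
    (hU : ∀ s, U s ω ∈ Set.Ioo (0:ℝ) 1) (t : ℕ) : chainR n U t ω ≤ n - t := by
  induction t with
  | zero => simp [chainR]
  | succ t ih =>
    rcases Nat.eq_zero_or_pos (chainR n U t ω) with h0 | hpos
    · have : chainR n U (t+1) ω = 0 := chainR_zero_mono (Nat.le_succ t) h0
      omega
    · have hlt : chainR n U (t+1) ω < chainR n U t ω := by
        have hx : ((chainR n U t ω : ℝ)) * U (t+1) ω < chainR n U t ω := by
          have h1 : (0:ℝ) < chainR n U t ω := by exact_mod_cast hpos
          nlinarith [(hU (t+1)).1, (hU (t+1)).2]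
        have hnn : (0:ℝ) ≤ (chainR n U t ω : ℝ) * U (t+1) ω :=
          mul_nonneg (Nat.cast_nonneg _) (le_of_lt (hU (t+1)).1)
        have := (Nat.floor_lt hnn).2 hx
        simpa [chainR] using this
      omega

lemma chainR_hitZ_zero {Ω : Type*} {n : ℕ} {U : ℕ → Ω → ℝ} {ω : Ω}
    (hU : ∀ s, U s ω ∈ Set.Ioo (0:ℝ) 1) : chainR n U (hitZ n U ω) ω = 0 := by
  have hne : {t | chainR n U t ω = 0}.Nonempty :=
    ⟨n, show chainR n U n ω = 0 by have := chainR_le_sub n U ω hU n; omega⟩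
  exact Nat.sInf_mem hne

lemma hitZ_le {Ω : Type*} {n : ℕ} {U : ℕ → Ω → ℝ} {ω : Ω} {t : ℕ}
    (h : chainR n U t ω = 0) : hitZ n U ω ≤ t := Nat.sInf_le h

lemma hitZ_gt_of_chainR_ne {Ω : Type*} {n : ℕ} {U : ℕ → Ω → ℝ} {ω : Ω} {t : ℕ}
    (hU : ∀ s, U s ω ∈ Set.Ioo (0:ℝ) 1) (h : chainR n U t ω ≠ 0) : t < hitZ n U ω := by
  by_contra hle
  push_neg at hle
  exact h (chainR_zero_mono hle (chainR_hitZ_zero hU))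

/-- Pointwise lower bound for the chain. -/
lemma chainR_ge {Ω : Type*} (n : ℕ) (U : ℕ → Ω → ℝ) (ω : Ω)
    (hU : ∀ s, U s ω ∈ Set.Ioo (0:ℝ) 1) (t : ℕ) :
    (n : ℝ) * ∏ s ∈ Finset.range t, U (s+1) ω - t ≤ chainR n U t ω := by
  induction t with
  | zero => simp [chainR]
  | succ t ih =>
    have hU1 := hU (t+1)
    have hprod_nonneg : (0:ℝ) ≤ ∏ s ∈ Finset.range t, U (s+1) ω :=
      Finset.prod_nonneg fun s _ => le_of_lt (hU (s+1)).1
    have key : ((chainR n U t ω : ℝ)) * U (t+1) ω - 1 < chainR n U (t+1) ω := by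
      have := Nat.sub_one_lt_floor ((chainR n U t ω : ℝ) * U (t+1) ω)
      simpa [chainR] using this
    have step : (n : ℝ) * ∏ s ∈ Finset.range (t+1), U (s+1) ω - (t+1)
        ≤ (chainR n U t ω : ℝ) * U (t+1) ω - 1 := by
      rw [Finset.prod_range_succ]
      have h2 : ((n : ℝ) * ∏ s ∈ Finset.range t, U (s+1) ω) * U (t+1) ω
          ≤ ((chainR n U t ω : ℝ) + t) * U (t+1) ω := by
        apply mul_le_mul_of_nonneg_right _ (le_of_lt hU1.1)
        linarith [ih]
      have h3 : ((chainR n U t ω : ℝ) + t) * U (t+1) ω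
          ≤ (chainR n U t ω : ℝ) * U (t+1) ω + t := by
        have : (t:ℝ) * U (t+1) ω ≤ t := by
          nlinarith [hU1.1, hU1.2, Nat.cast_nonneg (α := ℝ) t]
        nlinarith
      push_cast
      nlinarith
    have hfin := lt_of_le_of_lt step key
    push_cast at hfin ⊢
    linarith

section Indep

variable {Ω : Type} [MeasureSpace Ω] [IsProbabilityMeasure (ℙ : Measure Ω)]
variable {U : ℕ × ℕ → Ω → ℝ}

/-- The coordinates driving row `i` up to time `t`. -/
def blockSet (i t : ℕ) : Finset (ℕ × ℕ) := (Finset.range t).image (fun s => (i, s+1))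

lemma mem_blockSet_iff {i t : ℕ} {p : ℕ × ℕ} :
    p ∈ blockSet i t ↔ p.1 = i ∧ 1 ≤ p.2 ∧ p.2 ≤ t := by
  simp only [blockSet, Finset.mem_image, Finset.mem_range]
  constructor
  · rintro ⟨s, hs, rfl⟩; exact ⟨rfl, by omega, by omega⟩
  · rintro ⟨h1, h2, h3⟩
    exact ⟨p.2 - 1, by omega, by rw [← h1]; ext <;> simp <;> omega⟩

/-- `rowFun n t i T` computes the chain of row `i` at time `t` from the values of the
coordinates in `T`. -/
noncomputable def rowFun (n t i : ℕ) (T : Finset (ℕ × ℕ)) (x : ↥T → ℝ) : ℕ :=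
  runChain n (fun s => if h : ((i, s) : ℕ × ℕ) ∈ T then x ⟨(i, s), h⟩ else 0) t

lemma measurable_rowFun (n t i : ℕ) (T : Finset (ℕ × ℕ)) : Measurable (rowFun n t i T) := by
  apply (measurable_runChain n t).comp
  apply measurable_pi_lambda
  intro s
  by_cases h : ((i, s) : ℕ × ℕ) ∈ T
  · simpa [h] using measurable_pi_apply (⟨(i, s), h⟩ : ↥T)
  · simpa [h] using measurable_const (α := ℝ) (β := ↥T → ℝ) (a := 0)

lemma rowFun_tuple (n t i : ℕ) (T : Finset (ℕ × ℕ)) (hT : ∀ s, 1 ≤ s → s ≤ t → ((i, s) : ℕ × ℕ) ∈ T)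
    (ω : Ω) : rowFun n t i T (fun p : ↥T => U p ω) = chainR n (fun s => U (i, s)) t ω := by
  rw [chainR_eq_runChain]
  apply runChain_congr
  intro s h1 h2
  simp [rowFun, hT s h1 h2]

variable (hUm : ∀ p, Measurable (U p))
  (hUi : iIndepFun U (ℙ : Measure Ω))

include hUm hUi in
/-- The chain of row `i` at time `t` is independent of the next driving variable. -/
lemma indepFun_chainR_succ (n i t : ℕ) :
    IndepFun (chainR n (fun s => U (i, s)) t) (U (i, t+1)) (ℙ : Measure Ω) := by
  have hmem : ((i, t+1) : ℕ × ℕ) ∈ ({((i, t+1) : ℕ × ℕ)} : Finset (ℕ × ℕ)) := by simp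
  have hd : Disjoint (blockSet i t) ({((i, t+1) : ℕ × ℕ)} : Finset (ℕ × ℕ)) := by
    simp only [Finset.disjoint_singleton_right, mem_blockSet_iff]
    omega
  have h := ((hUi.indepFun_finset (blockSet i t) {((i, t+1) : ℕ × ℕ)} hd hUm).comp
    (measurable_rowFun n t i (blockSet i t))
    (measurable_pi_apply (⟨(i, t+1), hmem⟩ : ↥({((i, t+1) : ℕ × ℕ)} : Finset (ℕ × ℕ)))))
  have e1 : (rowFun n t i (blockSet i t)) ∘ (fun ω (p : ↥(blockSet i t)) => U p ω)
      = chainR n (fun s => U (i, s)) t := by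
    funext ω
    exact rowFun_tuple n t i _ (fun s h1 h2 => mem_blockSet_iff.2 ⟨rfl, h1, h2⟩) ω
  rwa [e1] at h

include hUm hUi in
/-- Products over a row factorize. -/
lemma lintegral_prod_row (g : ℝ → ℝ≥0∞) (hg : Measurable g) (i t : ℕ) :
    ∫⁻ ω, ∏ s ∈ Finset.range t, g (U (i, s+1) ω) ∂(ℙ : Measure Ω)
      = ∏ s ∈ Finset.range t, ∫⁻ ω, g (U (i, s+1) ω) ∂(ℙ : Measure Ω) := by
  induction t with
  | zero => simp
  | succ t ih =>
    have hmem : ((i, t+1) : ℕ × ℕ) ∈ ({((i, t+1) : ℕ × ℕ)} : Finset (ℕ × ℕ)) := by simp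
    have hd : Disjoint (blockSet i t) ({((i, t+1) : ℕ × ℕ)} : Finset (ℕ × ℕ)) := by
      simp only [Finset.disjoint_singleton_right, mem_blockSet_iff]
      omega
    set φ : (↥(blockSet i t) → ℝ) → ℝ≥0∞ := fun x =>
      ∏ s ∈ Finset.range t,
        g (if h : ((i, s+1) : ℕ × ℕ) ∈ blockSet i t then x ⟨(i, s+1), h⟩ else 0) with hφ
    have hφm : Measurable φ := by
      apply Finset.measurable_prod
      intro s _
      apply hg.comp
      by_cases h : ((i, s+1) : ℕ × ℕ) ∈ blockSet i t
      · simpa [h] using measurable_pi_apply (⟨(i, s+1), h⟩ : ↥(blockSet i t))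
      · simpa [h] using measurable_const (α := ℝ) (β := ↥(blockSet i t) → ℝ) (a := 0)
    set ψ : (↥({((i, t+1) : ℕ × ℕ)} : Finset (ℕ × ℕ)) → ℝ) → ℝ≥0∞ := fun y =>
      g (y ⟨(i, t+1), hmem⟩) with hψ
    have hψm : Measurable ψ := hg.comp (measurable_pi_apply _)
    have h := ((hUi.indepFun_finset (blockSet i t) {((i, t+1) : ℕ × ℕ)} hd hUm).comp hφm hψm)
    have e1 : (φ ∘ fun ω (p : ↥(blockSet i t)) => U p ω)
        = fun ω => ∏ s ∈ Finset.range t, g (U (i, s+1) ω) := by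
      funext ω
      simp only [hφ, Function.comp_apply]
      apply Finset.prod_congr rfl
      intro s hs
      have hmem' : ((i, s+1) : ℕ × ℕ) ∈ blockSet i t :=
        mem_blockSet_iff.2 ⟨rfl, by omega, by simpa using Finset.mem_range.1 hs⟩
      rw [dif_pos hmem']
    have e2 : (ψ ∘ fun ω (p : ↥({((i, t+1) : ℕ × ℕ)} : Finset (ℕ × ℕ))) => U p ω)
        = fun ω => g (U (i, t+1) ω) := rfl
    rw [e1, e2] at h
    have hFm : Measurable fun ω => ∏ s ∈ Finset.range t, g (U (i, s+1) ω) :=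
      Finset.measurable_prod _ (fun s _ => hg.comp (hUm _))
    calc ∫⁻ ω, ∏ s ∈ Finset.range (t+1), g (U (i, s+1) ω) ∂(ℙ : Measure Ω)
        = ∫⁻ ω, (∏ s ∈ Finset.range t, g (U (i, s+1) ω)) * g (U (i, t+1) ω) ∂(ℙ : Measure Ω) := by
          simp_rw [Finset.prod_range_succ]
      _ = (∫⁻ ω, ∏ s ∈ Finset.range t, g (U (i, s+1) ω) ∂(ℙ : Measure Ω))
            * ∫⁻ ω, g (U (i, t+1) ω) ∂(ℙ : Measure Ω) :=
          lintegral_mul_eq_lintegral_mul_lintegral_of_indepFun hFm (hg.comp (hUm _)) h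
      _ = ∏ s ∈ Finset.range (t+1), ∫⁻ ω, g (U (i, s+1) ω) ∂(ℙ : Measure Ω) := by
          rw [ih, Finset.prod_range_succ]

include hUm hUi in
/-- The per-row death events are independent across rows. -/
lemma meas_biInter_rows (n t : ℕ) (S : Finset ℕ) :
    ℙ (⋂ i ∈ S, {ω | chainR n (fun s => U (i, s)) t ω = 0})
      = ∏ i ∈ S, ℙ {ω | chainR n (fun s => U (i, s)) t ω = 0} := by
  classical
  induction S using Finset.induction_on with
  | empty => simp
  | @insert a S ha ih =>
    set T' : Finset (ℕ × ℕ) := S.biUnion (fun j => blockSet j t) with hT'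
    have hd : Disjoint (blockSet a t) T' := by
      rw [Finset.disjoint_left]
      intro p hp hp'
      rcases Finset.mem_biUnion.1 hp' with ⟨j, hj, hpj⟩
      have h1 := (mem_blockSet_iff.1 hp).1
      have h2 := (mem_blockSet_iff.1 hpj).1
      rw [h1] at h2
      exact ha (h2 ▸ hj)
    have hindep := hUi.indepFun_finset (blockSet a t) T' hd hUm
    set A : Set (↥(blockSet a t) → ℝ) := rowFun n t a (blockSet a t) ⁻¹' {0} with hA
    set B : Set (↥T' → ℝ) := ⋂ i ∈ S, rowFun n t i T' ⁻¹' {0} with hB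
    have hAm : MeasurableSet A := (measurable_rowFun n t a _) (measurableSet_singleton 0)
    have hBm : MeasurableSet B := by
      apply MeasurableSet.biInter (Finset.countable_toSet S)
      intro i _
      exact (measurable_rowFun n t i _) (measurableSet_singleton 0)
    have key := hindep.measure_inter_preimage_eq_mul _ _ hAm hBm
    have e1 : (fun ω (p : ↥(blockSet a t)) => U p ω) ⁻¹' A
        = {ω | chainR n (fun s => U (a, s)) t ω = 0} := by
      ext ω
      simp only [hA, Set.mem_preimage, Set.mem_singleton_iff, Set.mem_setOf_eq]
      rw [rowFun_tuple n t a _ (fun s h1 h2 => mem_blockSet_iff.2 ⟨rfl, h1, h2⟩) ω]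
    have e2 : (fun ω (p : ↥T') => U p ω) ⁻¹' B
        = ⋂ i ∈ S, {ω | chainR n (fun s => U (i, s)) t ω = 0} := by
      ext ω
      simp only [hB, Set.mem_preimage, Set.mem_iInter, Set.mem_singleton_iff, Set.mem_setOf_eq]
      constructor
      · intro h i hi
        rw [← rowFun_tuple n t i T' (fun s h1 h2 => Finset.mem_biUnion.2
            ⟨i, hi, mem_blockSet_iff.2 ⟨rfl, h1, h2⟩⟩) ω]
        exact h i hi
      · intro h i hi
        rw [rowFun_tuple n t i T' (fun s h1 h2 => Finset.mem_biUnion.2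
            ⟨i, hi, mem_blockSet_iff.2 ⟨rfl, h1, h2⟩⟩) ω]
        exact h i hi
    rw [e1, e2] at key
    rw [Finset.set_biInter_insert, key, ih, Finset.prod_insert ha]

end Indep

lemma natfloor_cast_le_ofReal (x : ℝ) : ((⌊x⌋₊ : ℝ≥0∞)) ≤ ENNReal.ofReal x := by
  rcases le_or_gt 0 x with h | h
  · calc ((⌊x⌋₊ : ℝ≥0∞)) = ENNReal.ofReal ((⌊x⌋₊ : ℕ) : ℝ) := by
          rw [ENNReal.ofReal_natCast]
      _ ≤ ENNReal.ofReal x := ENNReal.ofReal_le_ofReal (Nat.floor_le h)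
  · simp [Nat.floor_of_nonpos h.le, ENNReal.ofReal_of_nonpos h.le]

lemma real_sqrt_prod_range (f : ℕ → ℝ) (hf : ∀ s, 0 ≤ f s) (t : ℕ) :
    Real.sqrt (∏ s ∈ Finset.range t, f s) = ∏ s ∈ Finset.range t, Real.sqrt (f s) := by
  induction t with
  | zero => simp
  | succ t ih =>
    rw [Finset.prod_range_succ, Finset.prod_range_succ, Real.sqrt_mul
      (Finset.prod_nonneg fun s _ => hf s), ih]

section Moments

variable {Ω : Type} [MeasureSpace Ω] [IsProbabilityMeasure (ℙ : Measure Ω)]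
variable {U : ℕ × ℕ → Ω → ℝ}
variable (hUm : ∀ p, Measurable (U p))
  (hUi : iIndepFun U (ℙ : Measure Ω))
  (hUl : ∀ p, Measure.map (U p) ℙ = (volume : Measure ℝ).restrict (Set.Icc 0 1))

include hUm hUl in
lemma lintegral_comp_U (g : ℝ → ℝ≥0∞) (hg : Measurable g) (p : ℕ × ℕ) :
    ∫⁻ ω, g (U p ω) ∂(ℙ : Measure Ω) = ∫⁻ x in Set.Icc (0:ℝ) 1, g x := by
  rw [← lintegral_map hg (hUm p), hUl p]

include hUm hUl in
lemma lintegral_ofReal_U (p : ℕ × ℕ) :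
    ∫⁻ ω, ENNReal.ofReal (U p ω) ∂(ℙ : Measure Ω) = ENNReal.ofReal (1/2) := by
  rw [lintegral_comp_U hUm hUl _ ENNReal.measurable_ofReal p,
    ← ofReal_integral_eq_lintegral_ofReal]
  · congr 1
    rw [MeasureTheory.integral_Icc_eq_integral_Ioc,
      ← intervalIntegral.integral_of_le (zero_le_one (α := ℝ))]
    rw [integral_id]
    norm_num
  · exact continuous_id.integrableOn_Icc
  · exact (ae_restrict_iff' measurableSet_Icc).2 (ae_of_all _ fun x hx => hx.1)

include hUm hUl in
lemma lintegral_invsqrt_U (p : ℕ × ℕ) :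
    ∫⁻ ω, ENNReal.ofReal ((Real.sqrt (U p ω))⁻¹) ∂(ℙ : Measure Ω) = ENNReal.ofReal 2 := by
  have hms : Measurable fun x : ℝ => (Real.sqrt x)⁻¹ :=
    (Real.continuous_sqrt.measurable).inv
  have h0 : ∫⁻ ω, ENNReal.ofReal ((Real.sqrt (U p ω))⁻¹) ∂(ℙ : Measure Ω)
      = ∫⁻ x in Set.Icc (0:ℝ) 1, ENNReal.ofReal ((Real.sqrt x)⁻¹) :=
    lintegral_comp_U hUm hUl _ (ENNReal.measurable_ofReal.comp hms) p
  rw [h0]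
  have heq : ∀ x ∈ Set.Icc (0:ℝ) 1,
      ENNReal.ofReal ((Real.sqrt x)⁻¹) = ENNReal.ofReal (x ^ (-(1/2) : ℝ)) := by
    intro x hx
    rw [Real.rpow_neg hx.1, Real.sqrt_eq_rpow]
  rw [setLIntegral_congr_fun measurableSet_Icc heq]
  have hint : IntegrableOn (fun x : ℝ => x ^ (-(1/2) : ℝ)) (Set.Icc 0 1) volume := by
    rw [integrableOn_Icc_iff_integrableOn_Ioc]
    have := (intervalIntegral.intervalIntegrable_rpow' (a := 0) (b := 1) (r := -(1/2)) (by norm_num)).1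
    simpa using this
  rw [← ofReal_integral_eq_lintegral_ofReal hint
    ((ae_restrict_iff' measurableSet_Icc).2 (ae_of_all _ fun x hx => Real.rpow_nonneg hx.1 _))]
  congr 1
  rw [MeasureTheory.integral_Icc_eq_integral_Ioc,
    ← intervalIntegral.integral_of_le (zero_le_one (α := ℝ)),
    integral_rpow (Or.inl (by norm_num))]
  rw [Real.one_rpow, Real.zero_rpow (by norm_num)]
  norm_num

include hUm hUi hUl in
lemma lintegral_chainR_le (n i : ℕ) (t : ℕ) :
    ∫⁻ ω, ((chainR n (fun s => U (i, s)) t ω : ℕ) : ℝ≥0∞) ∂(ℙ : Measure Ω)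
      ≤ (n : ℝ≥0∞) * (ENNReal.ofReal (1/2)) ^ t := by
  induction t with
  | zero => simp [chainR]
  | succ t ih =>
    have hptw : ∀ ω, ((chainR n (fun s => U (i, s)) (t+1) ω : ℕ) : ℝ≥0∞)
        ≤ ((chainR n (fun s => U (i, s)) t ω : ℕ) : ℝ≥0∞) * ENNReal.ofReal (U (i, t+1) ω) := by
      intro ω
      have h1 : ((chainR n (fun s => U (i, s)) (t+1) ω : ℕ) : ℝ≥0∞)
          = ((⌊(chainR n (fun s => U (i, s)) t ω : ℝ) * U (i, t+1) ω⌋₊ : ℕ) : ℝ≥0∞) := rfl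
      rw [h1]
      refine (natfloor_cast_le_ofReal _).trans ?_
      rw [ENNReal.ofReal_mul (Nat.cast_nonneg _), ENNReal.ofReal_natCast]
    have hindep : IndepFun (fun ω => ((chainR n (fun s => U (i, s)) t ω : ℕ) : ℝ≥0∞))
        (fun ω => ENNReal.ofReal (U (i, t+1) ω)) (ℙ : Measure Ω) := by
      have h := (indepFun_chainR_succ hUm hUi n i t).comp
        (measurable_from_nat (mα := ENNReal.measurableSpace) (f := fun m : ℕ => (m : ℝ≥0∞))) ENNReal.measurable_ofReal
      exact h
    have hMm : Measurable fun ω => ((chainR n (fun s => U (i, s)) t ω : ℕ) : ℝ≥0∞) :=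
      measurable_from_nat.comp (measurable_chainR n _ (fun s => hUm (i, s)) t)
    calc ∫⁻ ω, ((chainR n (fun s => U (i, s)) (t+1) ω : ℕ) : ℝ≥0∞) ∂(ℙ : Measure Ω)
        ≤ ∫⁻ ω, ((chainR n (fun s => U (i, s)) t ω : ℕ) : ℝ≥0∞)
            * ENNReal.ofReal (U (i, t+1) ω) ∂(ℙ : Measure Ω) := lintegral_mono hptw
      _ = (∫⁻ ω, ((chainR n (fun s => U (i, s)) t ω : ℕ) : ℝ≥0∞) ∂(ℙ : Measure Ω))
            * ∫⁻ ω, ENNReal.ofReal (U (i, t+1) ω) ∂(ℙ : Measure Ω) :=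
          lintegral_mul_eq_lintegral_mul_lintegral_of_indepFun hMm
            (ENNReal.measurable_ofReal.comp (hUm _)) hindep
      _ ≤ ((n : ℝ≥0∞) * (ENNReal.ofReal (1/2)) ^ t) * ENNReal.ofReal (1/2) := by
          rw [lintegral_ofReal_U hUm hUl]
          exact mul_le_mul_left ih _
      _ = (n : ℝ≥0∞) * (ENNReal.ofReal (1/2)) ^ (t+1) := by ring

include hUm hUi hUl in
lemma prob_chainR_ne_zero_le (n i t : ℕ) :
    ℙ {ω | chainR n (fun s => U (i, s)) t ω ≠ 0}
      ≤ (n : ℝ≥0∞) * (ENNReal.ofReal (1/2)) ^ t := by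
  have hMm : Measurable fun ω => ((chainR n (fun s => U (i, s)) t ω : ℕ) : ℝ≥0∞) :=
    measurable_from_nat.comp (measurable_chainR n _ (fun s => hUm (i, s)) t)
  have h := mul_meas_ge_le_lintegral₀ (μ := (ℙ : Measure Ω)) hMm.aemeasurable 1
  simp only [one_mul] at h
  have hset : {ω | (1 : ℝ≥0∞) ≤ ((chainR n (fun s => U (i, s)) t ω : ℕ) : ℝ≥0∞)}
      = {ω | chainR n (fun s => U (i, s)) t ω ≠ 0} := by
    ext ω
    simp only [Set.mem_setOf_eq, Nat.one_le_cast, Nat.one_le_iff_ne_zero]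
  rw [hset] at h
  exact h.trans (lintegral_chainR_le hUm hUi hUl n i t)

include hUm hUl in
lemma prob_compl_Ioo_eq_zero :
    ℙ (⋂ p : ℕ × ℕ, U p ⁻¹' Set.Ioo (0:ℝ) 1)ᶜ = 0 := by
  rw [Set.compl_iInter]
  refine measure_iUnion_null fun p => ?_
  rw [← Set.preimage_compl, ← Measure.map_apply (hUm p) measurableSet_Ioo.compl, hUl p,
    Measure.restrict_apply measurableSet_Ioo.compl]
  have he : (Set.Ioo (0:ℝ) 1)ᶜ ∩ Set.Icc 0 1 = Set.Icc (0:ℝ) 1 \ Set.Ioo 0 1 := by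
    rw [Set.diff_eq, Set.inter_comm]
  rw [he, Set.Icc_diff_Ioo_same zero_le_one]
  rw [Set.insert_eq]
  refine le_antisymm (le_trans (measure_union_le _ _) ?_) zero_le
  simp [Real.volume_singleton]

include hUm hUi hUl in
lemma prob_chainR_eq_zero_le (n : ℕ) (hn : 1 ≤ n) (i t : ℕ) :
    ℙ {ω | chainR n (fun s => U (i, s)) t ω = 0}
      ≤ ENNReal.ofReal (Real.sqrt (((t : ℝ) + 1) / n)) * (ENNReal.ofReal 2) ^ t := by
  have hms : Measurable fun x : ℝ => (Real.sqrt x)⁻¹ :=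
    (Real.continuous_sqrt.measurable).inv
  set a : ℝ := ((t : ℝ) + 1) / n with ha_def
  have hnpos : (0:ℝ) < n := by exact_mod_cast hn
  have ha : 0 < a := by positivity
  set P : Ω → ℝ≥0∞ := fun ω =>
    ∏ s ∈ Finset.range t, ENNReal.ofReal ((Real.sqrt (U (i, s+1) ω))⁻¹) with hP_def
  have hPm : Measurable P :=
    Finset.measurable_prod _ fun s _ => (ENNReal.measurable_ofReal.comp hms).comp (hUm _)
  have hP_int : ∫⁻ ω, P ω ∂(ℙ : Measure Ω) = (ENNReal.ofReal 2) ^ t := by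
    have h0 : ∫⁻ ω, P ω ∂(ℙ : Measure Ω)
        = ∏ s ∈ Finset.range t,
            ∫⁻ ω, ENNReal.ofReal ((Real.sqrt (U (i, s+1) ω))⁻¹) ∂(ℙ : Measure Ω) :=
      lintegral_prod_row hUm hUi (fun x => ENNReal.ofReal ((Real.sqrt x)⁻¹))
        (ENNReal.measurable_ofReal.comp hms) i t
    rw [h0]
    have h1 : ∀ s ∈ Finset.range t,
        ∫⁻ ω, ENNReal.ofReal ((Real.sqrt (U (i, s+1) ω))⁻¹) ∂(ℙ : Measure Ω)
          = ENNReal.ofReal 2 := fun s _ => lintegral_invsqrt_U hUm hUl (i, s+1)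
    rw [Finset.prod_congr rfl h1, Finset.prod_const, Finset.card_range]
  set G : Set Ω := ⋂ p : ℕ × ℕ, U p ⁻¹' Set.Ioo (0:ℝ) 1 with hG_def
  have hGc : ℙ Gᶜ = 0 := prob_compl_Ioo_eq_zero hUm hUl
  have hincl : {ω | chainR n (fun s => U (i, s)) t ω = 0} ∩ G
      ⊆ {ω | ENNReal.ofReal ((Real.sqrt a)⁻¹) ≤ P ω} := by
    rintro ω ⟨h0, hGω⟩
    have hV : ∀ s, U (i, s) ω ∈ Set.Ioo (0:ℝ) 1 := fun s => Set.mem_iInter.1 hGω (i, s)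
    have hlb := chainR_ge n (fun s => U (i, s)) ω hV t
    rw [Set.mem_setOf_eq] at h0
    rw [h0] at hlb
    push_cast at hlb
    set Q := ∏ s ∈ Finset.range t, U (i, s+1) ω with hQ_def
    have hQpos : 0 < Q := Finset.prod_pos fun s _ => (hV (s+1)).1
    have hQle : Q ≤ a := by
      rw [ha_def, le_div_iff₀ hnpos]
      nlinarith
    have hsq : Real.sqrt Q ≤ Real.sqrt a := Real.sqrt_le_sqrt hQle
    have hsqQpos : 0 < Real.sqrt Q := Real.sqrt_pos.2 hQpos
    have hinv : (Real.sqrt a)⁻¹ ≤ (Real.sqrt Q)⁻¹ := by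
      rw [← one_div, ← one_div]
      exact one_div_le_one_div_of_le hsqQpos hsq
    have hprod : (Real.sqrt Q)⁻¹ = ∏ s ∈ Finset.range t, (Real.sqrt (U (i, s+1) ω))⁻¹ := by
      rw [hQ_def, real_sqrt_prod_range _ (fun s => (hV (s+1)).1.le) t, Finset.prod_inv_distrib]
    show ENNReal.ofReal ((Real.sqrt a)⁻¹) ≤ P ω
    calc ENNReal.ofReal ((Real.sqrt a)⁻¹) ≤ ENNReal.ofReal ((Real.sqrt Q)⁻¹) :=
        ENNReal.ofReal_le_ofReal hinv
      _ = ∏ s ∈ Finset.range t, ENNReal.ofReal ((Real.sqrt (U (i, s+1) ω))⁻¹) := by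
          rw [hprod, ENNReal.ofReal_prod_of_nonneg (fun s _ => inv_nonneg.2 (Real.sqrt_nonneg _))]
      _ = P ω := rfl
  have hmarkov := mul_meas_ge_le_lintegral₀ (μ := (ℙ : Measure Ω)) hPm.aemeasurable
    (ENNReal.ofReal ((Real.sqrt a)⁻¹))
  rw [hP_int] at hmarkov
  have hchain : ℙ {ω | chainR n (fun s => U (i, s)) t ω = 0}
      ≤ ℙ {ω | ENNReal.ofReal ((Real.sqrt a)⁻¹) ≤ P ω} := by
    calc ℙ {ω | chainR n (fun s => U (i, s)) t ω = 0}
        ≤ ℙ (({ω | chainR n (fun s => U (i, s)) t ω = 0} ∩ G) ∪ Gᶜ) := by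
          apply measure_mono
          intro ω hω
          by_cases h : ω ∈ G
          · exact Or.inl ⟨hω, h⟩
          · exact Or.inr h
      _ ≤ ℙ ({ω | chainR n (fun s => U (i, s)) t ω = 0} ∩ G) + ℙ Gᶜ := measure_union_le _ _
      _ = ℙ ({ω | chainR n (fun s => U (i, s)) t ω = 0} ∩ G) := by rw [hGc, add_zero]
      _ ≤ ℙ {ω | ENNReal.ofReal ((Real.sqrt a)⁻¹) ≤ P ω} := measure_mono hincl
  have hb0 : ENNReal.ofReal ((Real.sqrt a)⁻¹) ≠ 0 :=
    (ENNReal.ofReal_pos.2 (inv_pos.2 (Real.sqrt_pos.2 ha))).ne'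
  have hbfin : ENNReal.ofReal ((Real.sqrt a)⁻¹) ≠ ⊤ := ENNReal.ofReal_ne_top
  have hdiv : ℙ {ω | ENNReal.ofReal ((Real.sqrt a)⁻¹) ≤ P ω}
      ≤ (ENNReal.ofReal 2) ^ t / ENNReal.ofReal ((Real.sqrt a)⁻¹) := by
    rw [ENNReal.le_div_iff_mul_le (Or.inl hb0) (Or.inl hbfin), mul_comm]
    exact hmarkov
  have heq : (ENNReal.ofReal 2) ^ t / ENNReal.ofReal ((Real.sqrt a)⁻¹)
      = ENNReal.ofReal (Real.sqrt a) * (ENNReal.ofReal 2) ^ t := by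
    rw [div_eq_mul_inv, ENNReal.ofReal_inv_of_pos (Real.sqrt_pos.2 ha), inv_inv, mul_comm]
  exact hchain.trans (hdiv.trans (le_of_eq heq))

end Moments

/-- Elementary: `x ≤ exp (x/2)`. -/
lemma self_le_exp_half (x : ℝ) : x ≤ Real.exp (x / 2) := by
  rcases le_or_gt x 0 with h | h
  · exact h.trans (Real.exp_pos _).le
  · have h1 : x / 4 + 1 ≤ Real.exp (x / 4) := by
      have := Real.add_one_le_exp (x / 4)
      linarith
    have h2 : Real.exp (x / 2) = Real.exp (x / 4) * Real.exp (x / 4) := by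
      rw [← Real.exp_add]; ring_nf
    nlinarith [Real.exp_pos (x / 4), sq_nonneg (x / 4 - 1)]


set_option maxHeartbeats 2000000 in
/-- There exist universal constants `c, C > 0` such that: if `(k(n))` is a
sequence of positive integers with `k(n) = o(ln n)` as `n → ∞`, and `T(n) = Z₁ + ⋯ + Z_{k(n)}`
is a sum of `k(n)` i.i.d. copies of `Z(n)`, then
`P( c·k(n)·ln n < T(n) < C·k(n)·ln n ) → 1` as `n → ∞`. -/
theorem cdp_sum_bounds_small_k :
    ∃ c C : ℝ, 0 < c ∧ 0 < C ∧
      ∀ (Ω : Type) (_ : MeasureSpace Ω) (_ : IsProbabilityMeasure (ℙ : Measure Ω))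
        (U : ℕ × ℕ → Ω → ℝ), (∀ p, Measurable (U p)) →
        iIndepFun U ℙ →
        (∀ p, Measure.map (U p) ℙ = (volume : Measure ℝ).restrict (Set.Icc 0 1)) →
        ∀ k : ℕ → ℕ, (∀ n, 1 ≤ k n) →
          (fun n => (k n : ℝ)) =o[atTop] (fun n => Real.log n) →
          Tendsto
            (fun n => (ℙ {ω | c * (k n) * Real.log n < (sumZ n (k n) U ω : ℝ) ∧
                (sumZ n (k n) U ω : ℝ) < C * (k n) * Real.log n}).toReal)
            atTop (nhds 1) := by
  classical
  refine ⟨1/100, 5, by norm_num, by norm_num, ?_⟩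
  intro Ω _ _ U hUm hUi hUl k hk1 hko
  set L : ℕ → ℝ := fun n => Real.log n with hL_def
  set ε : ℕ → ℝ := fun n => 2 * Real.exp (-(L n)) + Real.exp (1 - L n / 10) with hε_def
  have hLtop : Tendsto L atTop atTop :=
    Real.tendsto_log_atTop.comp tendsto_natCast_atTop_atTop
  have hε0 : Tendsto ε atTop (nhds 0) := by
    have h1 : Tendsto (fun n => Real.exp (-(L n))) atTop (nhds 0) := by
      apply Real.tendsto_exp_atBot.comp
      exact tendsto_neg_atTop_atBot.comp hLtop
    have h2 : Tendsto (fun n => Real.exp (1 - L n / 10)) atTop (nhds 0) := by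
      apply Real.tendsto_exp_atBot.comp
      have h3 : Tendsto (fun n => L n / 10) atTop atTop :=
        hLtop.atTop_div_const (by norm_num)
      have h4 : Tendsto (fun n => L n / 10 - 1) atTop atTop :=
        tendsto_atTop_add_const_right _ (-1) h3
      have h5 := tendsto_neg_atTop_atBot.comp h4
      refine h5.congr fun n => ?_
      simp only [Function.comp_apply]
      ring
    have := ((h1.const_mul 2).add h2)
    simpa using this
  have hεnn : ∀ n, 0 ≤ ε n := fun n => by positivity
  -- the eventual bound
  have hmain : ∀ᶠ n in atTop,
      1 - ε n ≤ (ℙ {ω | 1/100 * (k n) * Real.log n < (sumZ n (k n) U ω : ℝ) ∧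
          (sumZ n (k n) U ω : ℝ) < 5 * (k n) * Real.log n}).toReal ∧
      (ℙ {ω | 1/100 * (k n) * Real.log n < (sumZ n (k n) U ω : ℝ) ∧
          (sumZ n (k n) U ω : ℝ) < 5 * (k n) * Real.log n}).toReal ≤ 1 := by
    have hev1 : ∀ᶠ n in atTop, (k n : ℝ) ≤ L n := by
      have := hko.def one_pos
      filter_upwards [this, hLtop.eventually_ge_atTop 0] with n h1 h2
      rw [Real.norm_eq_abs, Real.norm_eq_abs] at h1
      calc (k n : ℝ) = |(k n : ℝ)| := (abs_of_nonneg (Nat.cast_nonneg _)).symm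
        _ ≤ 1 * |L n| := h1
        _ = L n := by rw [one_mul, abs_of_nonneg h2]
    have hev2 : ∀ᶠ n in atTop, (10 : ℝ) ≤ L n := hLtop.eventually_ge_atTop 10
    have hev3 : ∀ᶠ n in atTop, 1 ≤ n := eventually_ge_atTop 1
    filter_upwards [hev1, hev2, hev3] with n hkL hL10 hn1
    -- fixed n from here on
    set K := k n with hK_def
    have hK1 : 1 ≤ K := hk1 n
    have hLpos : (0:ℝ) < L n := by linarith
    have hnpos : (0:ℝ) < n := by exact_mod_cast hn1
    have hnexp : (n : ℝ) = Real.exp (L n) := (Real.exp_log hnpos).symm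
    set s : ℕ := ⌊4 * L n⌋₊ with hs_def
    set t : ℕ := ⌊L n / 50⌋₊ with ht_def
    set m : ℕ := K / 2 + 1 with hm_def
    set G : Set Ω := ⋂ p : ℕ × ℕ, U p ⁻¹' Set.Ioo (0:ℝ) 1 with hG_def
    have hGc : ℙ Gᶜ = 0 := prob_compl_Ioo_eq_zero hUm hUl
    set goodSet : Set Ω := {ω | 1/100 * (K : ℝ) * Real.log n < (sumZ n K U ω : ℝ) ∧
        (sumZ n K U ω : ℝ) < 5 * (K : ℝ) * Real.log n} with hgood_def
    set badUp : Set Ω :=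
      ⋃ i ∈ Finset.range K, {ω | chainR n (fun s' => U (i, s')) s ω ≠ 0} with hbadUp_def
    set badLow : Set Ω :=
      (⋃ S ∈ Finset.powersetCard m (Finset.range K),
        ⋂ i ∈ S, {ω | chainR n (fun s' => U (i, s')) t ω = 0}) ∪ Gᶜ with hbadLow_def
    -- inclusion
    have hincl : goodSetᶜ ⊆ badUp ∪ badLow := by
      intro ω hω
      by_contra hcon
      rw [Set.mem_union, not_or] at hcon
      obtain ⟨hnotUp, hnotLow'⟩ := hcon
      rw [hbadLow_def, Set.mem_union, not_or] at hnotLow'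
      obtain ⟨hnotLow, hGω'⟩ := hnotLow'
      have hGω : ω ∈ G := by simpa using hGω'
      have hVω : ∀ i s', U (i, s') ω ∈ Set.Ioo (0:ℝ) 1 := by
        intro i s'
        exact Set.mem_iInter.1 hGω (i, s')
      apply hω
      refine ⟨?_, ?_⟩
      · -- lower bound
        set small : Finset ℕ :=
          (Finset.range K).filter (fun i => chainR n (fun s' => U (i, s')) t ω = 0) with hsmall
        set large : Finset ℕ :=
          (Finset.range K).filter (fun i => ¬ chainR n (fun s' => U (i, s')) t ω = 0) with hlarge
        have hcards : small.card + large.card = K := by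
          rw [hsmall, hlarge, Finset.card_filter_add_card_filter_not]
          exact Finset.card_range K
        have hsmall_lt : small.card < m := by
          by_contra hge
          push_neg at hge
          obtain ⟨S, hSsub, hScard⟩ := Finset.exists_subset_card_eq hge
          have hSmem : S ∈ Finset.powersetCard m (Finset.range K) :=
            Finset.mem_powersetCard.2 ⟨hSsub.trans (Finset.filter_subset _ _), hScard⟩
          apply hnotLow
          rw [Set.mem_iUnion]
          refine ⟨S, ?_⟩
          rw [Set.mem_iUnion]
          refine ⟨hSmem, ?_⟩
          rw [Set.mem_iInter₂]
          intro i hi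
          exact (Finset.mem_filter.1 (hSsub hi)).2
        have hlarge_ge : K - K / 2 ≤ large.card := by omega
        have hlarge_pos : 0 < large.card := by omega
        -- each large index contributes at least t+1
        have hsum_ge : large.card * (t + 1) ≤ sumZ n K U ω := by
          rw [sumZ]
          calc large.card * (t+1) = ∑ _i ∈ large, (t+1) := by
                rw [Finset.sum_const, smul_eq_mul]
            _ ≤ ∑ i ∈ large, hitZ n (fun s' => U (i, s')) ω := by
                apply Finset.sum_le_sum
                intro i hi
                have hne := (Finset.mem_filter.1 hi).2
                have := hitZ_gt_of_chainR_ne (fun s' => hVω i s') hne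
                omega
            _ ≤ ∑ i ∈ Finset.range K, hitZ n (fun s' => U (i, s')) ω := by
                apply Finset.sum_le_sum_of_subset (Finset.filter_subset _ _)
        -- real arithmetic
        have ht1 : L n / 50 < (t : ℝ) + 1 := by
          have := Nat.lt_floor_add_one (L n / 50)
          push_cast at this ⊢
          linarith
        have hcl : (K : ℝ) / 2 ≤ (large.card : ℝ) := by
          have h1 : ((K - K / 2 : ℕ) : ℝ) ≤ (large.card : ℝ) := by exact_mod_cast hlarge_ge
          have hc1 : ((K - K / 2 : ℕ) : ℝ) = (K : ℝ) - ((K / 2 : ℕ) : ℝ) := by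
            rw [Nat.cast_sub (Nat.div_le_self _ _)]
          have hc2 : 2 * ((K / 2 : ℕ) : ℝ) ≤ (K : ℝ) := by
            exact_mod_cast (by omega : 2 * (K / 2) ≤ K)
          linarith
        have hsum_ge' : (large.card : ℝ) * ((t:ℝ) + 1) ≤ (sumZ n K U ω : ℝ) := by
          exact_mod_cast hsum_ge
        have hclpos : (0:ℝ) < large.card := by exact_mod_cast hlarge_pos
        calc (1:ℝ)/100 * K * Real.log n = (K / 2) * (L n / 50) := by rw [hL_def]; ring
          _ ≤ (large.card : ℝ) * (L n / 50) := by
              apply mul_le_mul_of_nonneg_right hcl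
              positivity
          _ < (large.card : ℝ) * ((t:ℝ) + 1) := by
              exact mul_lt_mul_of_pos_left ht1 hclpos
          _ ≤ (sumZ n K U ω : ℝ) := hsum_ge'
      · -- upper bound
        have hall : ∀ i ∈ Finset.range K, chainR n (fun s' => U (i, s')) s ω = 0 := by
          intro i hi
          by_contra hne
          exact hnotUp (Set.mem_biUnion hi hne)
        have hsum_le : sumZ n K U ω ≤ K * s := by
          rw [sumZ]
          calc ∑ i ∈ Finset.range K, hitZ n (fun s' => U (i, s')) ω
              ≤ ∑ _i ∈ Finset.range K, s :=
                Finset.sum_le_sum fun i hi => hitZ_le (hall i hi)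
            _ = K * s := by rw [Finset.sum_const, Finset.card_range, smul_eq_mul]
        have hsle : (s : ℝ) ≤ 4 * L n := Nat.floor_le (by positivity)
        have hKpos : (0:ℝ) < K := by exact_mod_cast hK1
        calc (sumZ n K U ω : ℝ) ≤ (K : ℝ) * s := by exact_mod_cast hsum_le
          _ ≤ (K : ℝ) * (4 * L n) := by
              apply mul_le_mul_of_nonneg_left hsle (le_of_lt hKpos)
          _ < 5 * K * Real.log n := by rw [hL_def]; nlinarith
    -- probability of badUp
    have hbadUp_le : ℙ badUp ≤ ENNReal.ofReal (2 * Real.exp (-(L n))) := by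
      have h1 : ℙ badUp ≤ ∑ i ∈ Finset.range K,
          ℙ {ω | chainR n (fun s' => U (i, s')) s ω ≠ 0} := measure_biUnion_finset_le _ _
      have h2 : ∑ i ∈ Finset.range K, ℙ {ω | chainR n (fun s' => U (i, s')) s ω ≠ 0}
          ≤ ∑ _i ∈ Finset.range K, ((n : ℝ≥0∞) * (ENNReal.ofReal (1/2)) ^ s) :=
        Finset.sum_le_sum fun i _ => prob_chainR_ne_zero_le hUm hUi hUl n i s
      have h3 : ∑ _i ∈ Finset.range K, ((n : ℝ≥0∞) * (ENNReal.ofReal (1/2)) ^ s)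
          = ENNReal.ofReal ((K : ℝ) * ((n : ℝ) * (1/2) ^ s)) := by
        rw [Finset.sum_const, Finset.card_range, nsmul_eq_mul]
        rw [ENNReal.ofReal_mul (by positivity), ENNReal.ofReal_mul (by positivity),
          ENNReal.ofReal_natCast, ENNReal.ofReal_natCast, ENNReal.ofReal_pow (by norm_num)]
      have h4 : (K : ℝ) * ((n : ℝ) * (1/2) ^ s) ≤ 2 * Real.exp (-(L n)) := by
        have hKle : (K : ℝ) ≤ Real.exp (L n / 2) := hkL.trans (self_le_exp_half (L n))
        have hpow : ((1:ℝ)/2) ^ s ≤ 2 * Real.exp (-(4 * Real.log 2) * L n) := by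
          have hhalf : ((1:ℝ)/2) = Real.exp (-Real.log 2) := by
            rw [Real.exp_neg, Real.exp_log (by norm_num : (0:ℝ) < 2)]
            norm_num
          have hsge : 4 * L n - 1 < (s : ℝ) := by
            have := Nat.sub_one_lt_floor (4 * L n)
            push_cast at this ⊢
            linarith
          rw [hhalf, ← Real.exp_nat_mul]
          have : (s : ℝ) * (-Real.log 2) ≤ Real.log 2 + (-(4 * Real.log 2) * L n) := by
            have hlog2 : (0:ℝ) < Real.log 2 := Real.log_pos (by norm_num)
            nlinarith [mul_pos (sub_pos.2 hsge) hlog2]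
          calc Real.exp ((s : ℝ) * (-Real.log 2)) ≤
              Real.exp (Real.log 2 + (-(4 * Real.log 2) * L n)) := Real.exp_le_exp.2 this
            _ = 2 * Real.exp (-(4 * Real.log 2) * L n) := by
                rw [Real.exp_add, Real.exp_log (by norm_num : (0:ℝ) < 2)]
        calc (K : ℝ) * ((n : ℝ) * (1/2) ^ s)
            ≤ Real.exp (L n / 2) * (Real.exp (L n) * (2 * Real.exp (-(4 * Real.log 2) * L n))) := by
              rw [hnexp]
              apply mul_le_mul hKle _ (by positivity) (by positivity)
              apply mul_le_mul_of_nonneg_left hpow (by positivity)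
          _ = 2 * Real.exp (L n / 2 + L n + -(4 * Real.log 2) * L n) := by
              rw [Real.exp_add, Real.exp_add]; ring
          _ ≤ 2 * Real.exp (-(L n)) := by
              apply mul_le_mul_of_nonneg_left _ (by norm_num)
              apply Real.exp_le_exp.2
              have hlog : (0.6931471803 : ℝ) < Real.log 2 := Real.log_two_gt_d9
              nlinarith [mul_lt_mul_of_pos_right hlog hLpos]
      exact h1.trans (h2.trans (h3.trans_le (ENNReal.ofReal_le_ofReal h4)))
    -- probability of badLow
    have hbadLow_le : ℙ badLow ≤ ENNReal.ofReal (Real.exp (1 - L n / 10)) := by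
      obtain ⟨q, hq_def⟩ : ∃ q : ℝ, q = Real.sqrt (((t : ℝ) + 1) / n) * 2 ^ t := ⟨_, rfl⟩
      have hq_nonneg : 0 ≤ q := by rw [hq_def]; positivity
      have hq_le : q ≤ Real.exp (-(L n / 5)) := by
        have ht_le : (t : ℝ) ≤ L n / 50 := Nat.floor_le (by positivity)
        have hfrac : ((t : ℝ) + 1) / n ≤ Real.exp (-(L n / 2)) := by
          have h1 : (t : ℝ) + 1 ≤ Real.exp (L n / 2) := by
            have := Real.add_one_le_exp (L n / 2)
            linarith
          rw [hnexp, div_le_iff₀ (Real.exp_pos _), ← Real.exp_add]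
          calc (t:ℝ) + 1 ≤ Real.exp (L n / 2) := h1
            _ = Real.exp (-(L n / 2) + L n) := by congr 1; ring
        have hsqrt : Real.sqrt (((t : ℝ) + 1) / n) ≤ Real.exp (-(L n / 4)) := by
          have h2 : Real.exp (-(L n / 2)) = (Real.exp (-(L n / 4)))^2 := by
            rw [← Real.exp_nat_mul]
            congr 1; push_cast; ring
          calc Real.sqrt (((t : ℝ) + 1) / n) ≤ Real.sqrt (Real.exp (-(L n / 2))) :=
              Real.sqrt_le_sqrt hfrac
            _ = Real.exp (-(L n / 4)) := by
                rw [h2, Real.sqrt_sq (Real.exp_pos _).le]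
        have hpow2 : (2:ℝ) ^ t ≤ Real.exp (L n / 50) := by
          have h2e : (2:ℝ) = Real.exp (Real.log 2) := (Real.exp_log (by norm_num)).symm
          rw [h2e, ← Real.exp_nat_mul]
          apply Real.exp_le_exp.2
          have hlog2lt : Real.log 2 < 1 := by
            have := Real.log_two_lt_d9
            linarith
          have : (t : ℝ) * Real.log 2 ≤ (t : ℝ) := by
            nlinarith [Real.log_nonneg (by norm_num : (1:ℝ) ≤ 2), Nat.cast_nonneg (α := ℝ) t]
          linarith
        calc q = Real.sqrt (((t : ℝ) + 1) / n) * 2 ^ t := hq_def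
          _ ≤ Real.exp (-(L n / 4)) * Real.exp (L n / 50) := by
            apply mul_le_mul hsqrt hpow2 (by positivity) (by positivity)
          _ = Real.exp (-(L n / 4) + L n / 50) := (Real.exp_add _ _).symm
          _ ≤ Real.exp (-(L n / 5)) := by
              apply Real.exp_le_exp.2
              linarith
      have h1 : ℙ badLow ≤ ℙ (⋃ S ∈ Finset.powersetCard m (Finset.range K),
          ⋂ i ∈ S, {ω | chainR n (fun s' => U (i, s')) t ω = 0}) + ℙ Gᶜ :=
        (measure_union_le _ _)
      rw [hGc, add_zero] at h1
      have h2 : ℙ (⋃ S ∈ Finset.powersetCard m (Finset.range K),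
          ⋂ i ∈ S, {ω | chainR n (fun s' => U (i, s')) t ω = 0})
          ≤ ∑ S ∈ Finset.powersetCard m (Finset.range K),
              ℙ (⋂ i ∈ S, {ω | chainR n (fun s' => U (i, s')) t ω = 0}) :=
        measure_biUnion_finset_le _ _
      have h3 : ∀ S ∈ Finset.powersetCard m (Finset.range K),
          ℙ (⋂ i ∈ S, {ω | chainR n (fun s' => U (i, s')) t ω = 0})
            ≤ (ENNReal.ofReal q) ^ m := by
        intro S hS
        rw [meas_biInter_rows hUm hUi n t S]
        obtain ⟨hSsub, hScard⟩ := Finset.mem_powersetCard.1 hS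
        calc ∏ i ∈ S, ℙ {ω | chainR n (fun s' => U (i, s')) t ω = 0}
            ≤ ∏ _i ∈ S, ENNReal.ofReal q := by
              apply Finset.prod_le_prod'
              intro i _
              refine (prob_chainR_eq_zero_le hUm hUi hUl n hn1 i t).trans (le_of_eq ?_)
              rw [hq_def, ENNReal.ofReal_mul (Real.sqrt_nonneg _), ENNReal.ofReal_pow
                (by norm_num : (0:ℝ) ≤ 2)]
          _ = (ENNReal.ofReal q) ^ m := by rw [Finset.prod_const, hScard]
      have h4 : ∑ S ∈ Finset.powersetCard m (Finset.range K),
          ℙ (⋂ i ∈ S, {ω | chainR n (fun s' => U (i, s')) t ω = 0})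
          ≤ (K.choose m : ℝ≥0∞) * (ENNReal.ofReal q) ^ m := by
        calc ∑ S ∈ Finset.powersetCard m (Finset.range K),
            ℙ (⋂ i ∈ S, {ω | chainR n (fun s' => U (i, s')) t ω = 0})
            ≤ ∑ _S ∈ Finset.powersetCard m (Finset.range K), (ENNReal.ofReal q) ^ m :=
              Finset.sum_le_sum h3
          _ = (K.choose m : ℝ≥0∞) * (ENNReal.ofReal q) ^ m := by
              rw [Finset.sum_const, nsmul_eq_mul, Finset.card_powersetCard, Finset.card_range]
      have hchoose : (K.choose m : ℝ≥0∞) ≤ ((2:ℕ) ^ K : ℝ≥0∞) := by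
        have hmK : m ≤ K := by omega
        have : K.choose m ≤ 2 ^ K := by
          calc K.choose m ≤ ∑ j ∈ Finset.range (K+1), K.choose j :=
              Finset.single_le_sum (fun j _ => Nat.zero_le _)
                (Finset.mem_range.2 (by omega))
            _ = 2 ^ K := Nat.sum_range_choose K
        exact_mod_cast this
      have h5 : (K.choose m : ℝ≥0∞) * (ENNReal.ofReal q) ^ m
          ≤ ENNReal.ofReal ((2:ℝ) ^ K * q ^ m) := by
        rw [ENNReal.ofReal_mul (by positivity), ENNReal.ofReal_pow hq_nonneg,
          ENNReal.ofReal_pow (by norm_num : (0:ℝ) ≤ 2)]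
        apply mul_le_mul_left
        have : ((2:ℕ) ^ K : ℝ≥0∞) = (ENNReal.ofReal 2) ^ K := by
          rw [ENNReal.ofReal_ofNat]
          norm_cast
        exact hchoose.trans (le_of_eq this)
      have h6 : (2:ℝ) ^ K * q ^ m ≤ Real.exp (1 - L n / 10) := by
        have hqm : q ^ m ≤ Real.exp (-(L n / 5)) ^ m := pow_le_pow_left₀ hq_nonneg hq_le m
        have hqm2 : Real.exp (-(L n / 5)) ^ m = Real.exp ((m : ℝ) * (-(L n / 5))) := by
          rw [← Real.exp_nat_mul]
        have hm_ge : (K : ℝ) / 2 ≤ (m : ℝ) := by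
          have : K ≤ 2 * m := by omega
          have h' : (K : ℝ) ≤ 2 * (m : ℝ) := by exact_mod_cast this
          linarith
        have h2K : (2:ℝ) ^ K ≤ Real.exp (K : ℝ) := by
          have h2e : (2:ℝ) = Real.exp (Real.log 2) := (Real.exp_log (by norm_num)).symm
          rw [h2e, ← Real.exp_nat_mul]
          apply Real.exp_le_exp.2
          have hlog2lt : Real.log 2 < 1 := by linarith [Real.log_two_lt_d9]
          nlinarith [Nat.cast_nonneg (α := ℝ) K]
        calc (2:ℝ) ^ K * q ^ m
            ≤ Real.exp (K : ℝ) * Real.exp ((m : ℝ) * (-(L n / 5))) :=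
              mul_le_mul h2K (hqm.trans (le_of_eq hqm2)) (pow_nonneg hq_nonneg m)
                (Real.exp_pos _).le
          _ = Real.exp ((K : ℝ) + (m : ℝ) * (-(L n / 5))) := (Real.exp_add _ _).symm
          _ ≤ Real.exp (1 - L n / 10) := by
              apply Real.exp_le_exp.2
              have hK1' : (1:ℝ) ≤ (K : ℝ) := by exact_mod_cast hK1
              nlinarith [mul_nonneg (sub_nonneg.2 hm_ge) (by linarith : (0:ℝ) ≤ L n / 5),
                mul_nonneg (sub_nonneg.2 hK1') (by linarith : (0:ℝ) ≤ L n / 10 - 1)]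
      calc ℙ badLow ≤ _ := h1
        _ ≤ (K.choose m : ℝ≥0∞) * (ENNReal.ofReal q) ^ m := h2.trans h4
        _ ≤ ENNReal.ofReal ((2:ℝ) ^ K * q ^ m) := h5
        _ ≤ ENNReal.ofReal (Real.exp (1 - L n / 10)) := ENNReal.ofReal_le_ofReal h6
    -- assemble
    have hbad : ℙ goodSetᶜ ≤ ENNReal.ofReal (ε n) := by
      calc ℙ goodSetᶜ ≤ ℙ (badUp ∪ badLow) := measure_mono hincl
        _ ≤ ℙ badUp + ℙ badLow := measure_union_le _ _
        _ ≤ ENNReal.ofReal (2 * Real.exp (-(L n))) + ENNReal.ofReal (Real.exp (1 - L n / 10)) :=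
            add_le_add hbadUp_le hbadLow_le
        _ = ENNReal.ofReal (ε n) := by
            rw [← ENNReal.ofReal_add (by positivity) (by positivity)]
    have hone : (1 : ℝ≥0∞) ≤ ℙ goodSet + ENNReal.ofReal (ε n) := by
      calc (1 : ℝ≥0∞) = ℙ (Set.univ : Set Ω) := (measure_univ).symm
        _ ≤ ℙ (goodSet ∪ goodSetᶜ) := by rw [Set.union_compl_self]
        _ ≤ ℙ goodSet + ℙ goodSetᶜ := measure_union_le _ _
        _ ≤ ℙ goodSet + ENNReal.ofReal (ε n) := add_le_add_right hbad _
    have hfin : ℙ goodSet ≠ ⊤ := (measure_lt_top _ _).ne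
    constructor
    · have h1 : (1 : ℝ) ≤ (ℙ goodSet + ENNReal.ofReal (ε n)).toReal := by
        have := ENNReal.toReal_mono (by finiteness) hone
        simpa using this
      rw [ENNReal.toReal_add hfin ENNReal.ofReal_ne_top, ENNReal.toReal_ofReal (hεnn n)] at h1
      linarith
    · simpa using ENNReal.toReal_mono ENNReal.one_ne_top prob_le_one
  -- squeeze
  have hlow : Tendsto (fun n => 1 - ε n) atTop (nhds 1) := by
    have := hε0.const_sub 1
    simpa using this
  refine tendsto_of_tendsto_of_tendsto_of_le_of_le' hlow tendsto_const_nhds ?_ ?_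
  · filter_upwards [hmain] with n h using h.1
  · filter_upwards [hmain] with n h using h.2
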